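/- Let A be a Hausdorff abelian topological group in which every proper subgroup is finite. If the von Neumann kernel n(A) satisfies n(A) ≠ A and n(A) ≠ {0}, then the von Neumann kernel of the topological group n(A) (endowed with the subspace topology) is trivial: n(n(A)) = {0}; in particular n(n(A)) ≠ n(A), so the Bohr-closure operator c_b is not weakly hereditary. -/

import Mathlib

open Set Topology

universe u

/-- The Bohr-closure of a subset `S` of a topological additive group `G`: the set of `g ∈ G`
such that `f g ∈ cl(f(S))` for every continuous homomorphism `f` from `G` into a compact
Hausdorff topological additive group. -/
def addBohrClosure (G : Type u) [AddGroup G] [TopologicalSpace G] (S : Set G) : Set G :=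
  {g : G | ∀ (K : Type u) [AddGroup K] [TopologicalSpace K] [IsTopologicalAddGroup K]
    [CompactSpace K] [T2Space K] (f : G →+ K), Continuous f → f g ∈ closure (f '' S)}

/-- The von Neumann kernel `n(G)` of a topological additive group `G`. -/
def addVonNeumannKernel (G : Type u) [AddGroup G] [TopologicalSpace G] : Set G :=
  addBohrClosure G {0}

/-- Let `A` be a Hausdorff abelian topological group in which every proper subgroup is finite.
If `{0} ≠ n(A) ≠ A`, then the von Neumann kernel of the subgroup `n(A)` (with the subspace
topology) is trivial; in particular `n(n(A)) ≠ n(A)`, so the Bohr-closure is not weakly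
hereditary. -/
theorem vonNeumannKernel_of_vonNeumannKernel (A : Type u) [AddCommGroup A]
    [TopologicalSpace A] [IsTopologicalAddGroup A] [T2Space A]
    (hfin : ∀ S : AddSubgroup A, S ≠ ⊤ → (S : Set A).Finite)
    (N : AddSubgroup A) (hN : (N : Set A) = addVonNeumannKernel A)
    (hne_top : addVonNeumannKernel A ≠ Set.univ)
    (hne_bot : addVonNeumannKernel A ≠ ({0} : Set A)) :
    addVonNeumannKernel N = ({0} : Set N) ∧ addVonNeumannKernel N ≠ Set.univ := by
  -- N is a proper subgroup, hence finite
  have hNtop : N ≠ ⊤ := by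
    intro h
    apply hne_top
    rw [← hN, h]
    rfl
  have hNfin : (N : Set A).Finite := hfin N hNtop
  haveI : Finite N := hNfin
  haveI : DiscreteTopology N := Finite.instDiscreteTopology
  haveI : CompactSpace N := Finite.compactSpace
  have hker : addVonNeumannKernel N = ({0} : Set N) := by
    apply Set.Subset.antisymm
    · intro g hg
      have := hg N (AddMonoidHom.id N) continuous_id
      simp only [AddMonoidHom.id_apply, Set.image_singleton] at this
      rwa [closure_singleton, Set.mem_singleton_iff] at this
    · intro g hg
      rw [Set.mem_singleton_iff] at hg
      subst hg
      intro K _ _ _ _ _ f hf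
      have : f 0 ∈ f '' {0} := ⟨0, rfl, rfl⟩
      exact subset_closure this
  refine ⟨hker, ?_⟩
  rw [hker]
  -- N contains a nonzero element since n(A) ≠ {0} and 0 ∈ n(A)
  have h0 : (0 : A) ∈ addVonNeumannKernel A := by
    intro K _ _ _ _ _ f hf
    exact subset_closure ⟨0, rfl, rfl⟩
  have : ∃ x ∈ addVonNeumannKernel A, x ≠ 0 := by
    by_contra h
    push_neg at h
    apply hne_bot
    apply Set.Subset.antisymm
    · intro x hx; exact h x hx
    · intro x hx; rw [Set.mem_singleton_iff] at hx; subst hx; exact h0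
  obtain ⟨x, hx, hx0⟩ := this
  have hxN : x ∈ N := by rw [← hN] at hx; exact hx
  intro h
  have : (⟨x, hxN⟩ : N) ∈ ({0} : Set N) := by rw [h]; trivial
  rw [Set.mem_singleton_iff] at this
  exact hx0 (Subtype.ext_iff.mp this)
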